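/- For a nonsingular matrix A ∈ K(t)^{n×n} (K a field), there exist biproper matrices S, T (matrices over K(t)⁻ invertible over K(t)⁻) and a nonincreasing integer vector α ∈ ℤⁿ such that S A T = diag(t^{α_1}, …, t^{α_n}). Moreover, α_k = δ_k − δ_{k−1}, where δ_k is the maximum degree of the determinant of a k×k submatrix of A and δ_0 = 0. -/

import Mathlib

/-- The degree of a rational function, with `deg 0 = ⊥` (i.e. `-∞`). -/
noncomputable def degBot {K : Type*} [Field K] (f : RatFunc K) : WithBot ℤ := by
  classical exact if f = 0 then ⊥ else (f.intDegree : WithBot ℤ)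

/-- `deltaMinor A k` is the maximum degree of the determinant of a `k × k` submatrix of
`A` (which is `0` for `k = 0`, the empty determinant being `1`). -/
noncomputable def deltaMinor {K : Type*} [Field K] {n : ℕ}
    (A : Matrix (Fin n) (Fin n) (RatFunc K)) (k : ℕ) : WithBot ℤ :=
  Finset.univ.sup fun p : (Fin k ↪ Fin n) × (Fin k ↪ Fin n) =>
    degBot (A.submatrix p.1 p.2).det

namespace SM
variable {K : Type*} [Field K]

lemma degBot_zero : degBot (0 : RatFunc K) = ⊥ := by simp [degBot]

lemma degBot_of_ne {f : RatFunc K} (hf : f ≠ 0) : degBot f = (f.intDegree : WithBot ℤ) := by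
  simp [degBot, hf]

lemma degBot_one : degBot (1 : RatFunc K) = 0 := by
  rw [degBot_of_ne (one_ne_zero : (1 : RatFunc K) ≠ 0), RatFunc.intDegree_one]; rfl

lemma degBot_mul (f g : RatFunc K) : degBot (f * g) = degBot f + degBot g := by
  by_cases hf : f = 0
  · simp [hf, degBot_zero]
  by_cases hg : g = 0
  · simp [hg, degBot_zero]
  rw [degBot_of_ne hf, degBot_of_ne hg, degBot_of_ne (mul_ne_zero hf hg),
    RatFunc.intDegree_mul hf hg]
  push_cast; ring_nf

lemma degBot_neg (f : RatFunc K) : degBot (-f) = degBot f := by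
  by_cases hf : f = 0
  · simp [hf]
  · rw [degBot_of_ne hf, degBot_of_ne (neg_ne_zero.2 hf), RatFunc.intDegree_neg]

lemma degBot_add_le (f g : RatFunc K) : degBot (f + g) ≤ max (degBot f) (degBot g) := by
  by_cases hfg : f + g = 0
  · simp [hfg, degBot_zero]
  by_cases hg : g = 0
  · subst hg; rw [add_zero]; exact le_max_left _ _
  by_cases hf : f = 0
  · subst hf; rw [zero_add]; exact le_max_right _ _
  rw [degBot_of_ne hfg]
  rw [degBot_of_ne hf, degBot_of_ne hg]
  have := RatFunc.intDegree_add_le hg hfg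
  rcases le_max_iff.1 this with h | h
  · exact le_max_of_le_left (by exact_mod_cast h)
  · exact le_max_of_le_right (by exact_mod_cast h)

lemma degBot_sum_le {ι : Type*} (s : Finset ι) (f : ι → RatFunc K) (δ : WithBot ℤ)
    (h : ∀ i ∈ s, degBot (f i) ≤ δ) : degBot (∑ i ∈ s, f i) ≤ δ := by
  classical
  induction s using Finset.induction with
  | empty => simp [degBot_zero]
  | insert a s hx ih =>
    rw [Finset.sum_insert hx]
    refine le_trans (degBot_add_le _ _) (max_le (h a (Finset.mem_insert_self a s)) ?_)
    exact ih fun i hi => h i (Finset.mem_insert_of_mem hi)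

lemma degBot_prod {ι : Type*} (s : Finset ι) (f : ι → RatFunc K) :
    degBot (∏ i ∈ s, f i) = ∑ i ∈ s, degBot (f i) := by
  classical
  induction s using Finset.induction with
  | empty => simp [degBot_one]
  | insert a s hx ih =>
    rw [Finset.prod_insert hx, Finset.sum_insert hx, degBot_mul, ih]

lemma X_ne_zero : (RatFunc.X : RatFunc K) ≠ 0 := RatFunc.X_ne_zero

lemma intDegree_X_zpow (z : ℤ) : RatFunc.intDegree ((RatFunc.X : RatFunc K) ^ z) = z := by
  have hX : (RatFunc.X : RatFunc K) ≠ 0 := RatFunc.X_ne_zero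
  induction z using Int.induction_on with
  | zero => simp [RatFunc.intDegree_one]
  | succ n ih =>
    rw [zpow_add₀ hX, RatFunc.intDegree_mul (zpow_ne_zero _ hX) (zpow_ne_zero _ hX), ih]
    simp [RatFunc.intDegree_X]
  | pred n ih =>
    have h1 : (RatFunc.X : RatFunc K) ^ (-(n:ℤ) - 1) * RatFunc.X ^ (1:ℤ) = RatFunc.X ^ (-(n:ℤ)) := by
      rw [← zpow_add₀ hX]; ring_nf
    have h2 := RatFunc.intDegree_mul (x := (RatFunc.X : RatFunc K) ^ (-(n:ℤ) - 1))
      (y := (RatFunc.X : RatFunc K) ^ (1:ℤ)) (zpow_ne_zero _ hX) (zpow_ne_zero _ hX)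
    rw [h1, ih] at h2
    have h3 : RatFunc.intDegree ((RatFunc.X : RatFunc K) ^ (1:ℤ)) = 1 := by
      simp [RatFunc.intDegree_X]
    omega

lemma degBot_zpow (z : ℤ) : degBot ((RatFunc.X : RatFunc K) ^ z) = (z : WithBot ℤ) := by
  rw [degBot_of_ne (zpow_ne_zero z (RatFunc.X_ne_zero)), intDegree_X_zpow]

end SM

namespace SM
variable {K : Type*} [Field K]
open Matrix

variable {m : ℕ}

def Proper (M : Matrix (Fin m) (Fin m) (RatFunc K)) : Prop := ∀ i j, degBot (M i j) ≤ 0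

def Biproper (M : Matrix (Fin m) (Fin m) (RatFunc K)) : Prop :=
  Proper M ∧ ∃ M', Proper M' ∧ M * M' = 1 ∧ M' * M = 1

lemma Proper.one : Proper (1 : Matrix (Fin m) (Fin m) (RatFunc K)) := by
  intro i j
  rw [Matrix.one_apply]
  split
  · exact le_of_eq degBot_one
  · simp [degBot_zero]

lemma Proper.mul {M N : Matrix (Fin m) (Fin m) (RatFunc K)} (hM : Proper M) (hN : Proper N) :
    Proper (M * N) := by
  intro i j
  rw [Matrix.mul_apply]
  refine degBot_sum_le _ _ _ fun k _ => ?_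
  rw [degBot_mul]
  calc degBot (M i k) + degBot (N k j) ≤ 0 + 0 := add_le_add (hM i k) (hN k j)
    _ = 0 := by simp

lemma Biproper.one : Biproper (1 : Matrix (Fin m) (Fin m) (RatFunc K)) :=
  ⟨Proper.one, 1, Proper.one, by simp, by simp⟩

lemma Biproper.mul {M N : Matrix (Fin m) (Fin m) (RatFunc K)} (hM : Biproper M)
    (hN : Biproper N) : Biproper (M * N) := by
  obtain ⟨hMp, M', hM'p, hMM', hM'M⟩ := hM
  obtain ⟨hNp, N', hN'p, hNN', hN'N⟩ := hN
  refine ⟨hMp.mul hNp, N' * M', hN'p.mul hM'p, ?_, ?_⟩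
  · have : M * N * (N' * M') = M * (N * N') * M' := by
      simp only [Matrix.mul_assoc]
    rw [this, hNN', Matrix.mul_one, hMM']
  · have : N' * M' * (M * N) = N' * (M' * M) * N := by
      simp only [Matrix.mul_assoc]
    rw [this, hM'M, Matrix.mul_one, hN'N]

/-- Permutation matrix. -/
noncomputable def permMat (σ : Equiv.Perm (Fin m)) : Matrix (Fin m) (Fin m) (RatFunc K) :=
  Matrix.of fun i j => if j = σ i then 1 else 0

lemma permMat_mul (σ : Equiv.Perm (Fin m)) (M : Matrix (Fin m) (Fin m) (RatFunc K)) :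
    permMat σ * M = M.submatrix σ id := by
  ext i j
  rw [Matrix.mul_apply]
  simp [permMat, Matrix.submatrix_apply]

lemma mul_permMat (σ : Equiv.Perm (Fin m)) (M : Matrix (Fin m) (Fin m) (RatFunc K)) :
    M * permMat σ = M.submatrix id ⇑σ⁻¹ := by
  ext i j
  rw [Matrix.mul_apply]
  simp only [permMat, Matrix.of_apply]
  have : ∀ k : Fin m, M i k * (if j = σ k then 1 else 0)
      = if k = σ⁻¹ j then M i k else 0 := by
    intro k
    by_cases h : j = σ k
    · subst h; simp
    · have : ¬ (k = σ⁻¹ j) := by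
        intro hk; apply h; subst hk; simp
      rw [if_neg h, if_neg this, mul_zero]
  rw [Finset.sum_congr rfl fun k _ => this k]
  simp [Matrix.submatrix_apply]

lemma permMat_mul_permMat (σ : Equiv.Perm (Fin m)) :
    (permMat σ : Matrix (Fin m) (Fin m) (RatFunc K)) * permMat σ⁻¹ = 1 := by
  rw [permMat_mul]
  ext i j
  simp [permMat, Matrix.submatrix_apply, Matrix.one_apply, eq_comm]

lemma proper_permMat (σ : Equiv.Perm (Fin m)) :
    Proper (permMat σ : Matrix (Fin m) (Fin m) (RatFunc K)) := by
  intro i j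
  simp only [SM.permMat, Matrix.of_apply]
  split
  · exact le_of_eq degBot_one
  · simp [degBot_zero]

lemma biproper_permMat (σ : Equiv.Perm (Fin m)) :
    Biproper (permMat σ : Matrix (Fin m) (Fin m) (RatFunc K)) := by
  refine ⟨proper_permMat σ, permMat σ⁻¹, proper_permMat σ⁻¹, permMat_mul_permMat σ, ?_⟩
  have := permMat_mul_permMat (K := K) σ⁻¹
  simpa using this

lemma Biproper.diagonal {g : Fin m → RatFunc K} (hg : ∀ i, g i ≠ 0)
    (h0 : ∀ i, degBot (g i) ≤ 0) (h1 : ∀ i, degBot (g i)⁻¹ ≤ 0) :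
    Biproper (Matrix.diagonal g) := by
  have hp : Proper (Matrix.diagonal g) := by
    intro i j
    rw [Matrix.diagonal_apply]
    split
    · subst ‹i = j›; exact h0 i
    · simp [degBot_zero]
  refine ⟨hp, Matrix.diagonal (fun i => (g i)⁻¹), ?_, ?_, ?_⟩
  · intro i j
    rw [Matrix.diagonal_apply]
    split
    · subst ‹i = j›; exact h1 i
    · simp [degBot_zero]
  · rw [Matrix.diagonal_mul_diagonal]
    have : (fun i => g i * (g i)⁻¹) = fun _ => (1 : RatFunc K) := by
      funext i; exact mul_inv_cancel₀ (hg i)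
    rw [this, Matrix.diagonal_one]
  · rw [Matrix.diagonal_mul_diagonal]
    have : (fun i => (g i)⁻¹ * g i) = fun _ => (1 : RatFunc K) := by
      funext i; exact inv_mul_cancel₀ (hg i)
    rw [this, Matrix.diagonal_one]

end SM

namespace SM
variable {K : Type*} [Field K]
open Matrix

variable {n : ℕ}

/-- `1 +` a matrix supported on column `0` (off-diagonal part). -/
noncomputable def addCol (c : Fin (n + 1) → RatFunc K) : Matrix (Fin (n+1)) (Fin (n+1)) (RatFunc K) :=
  1 + Matrix.of (fun i j => if j = 0 then c i else 0)

/-- `1 +` a matrix supported on row `0`. -/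
noncomputable def addRow (r : Fin (n + 1) → RatFunc K) : Matrix (Fin (n+1)) (Fin (n+1)) (RatFunc K) :=
  1 + Matrix.of (fun i j => if i = 0 then r j else 0)

lemma addCol_mul (c : Fin (n+1) → RatFunc K) (M : Matrix (Fin (n+1)) (Fin (n+1)) (RatFunc K)) :
    addCol c * M = M + Matrix.of (fun i j => c i * M 0 j) := by
  rw [addCol, add_mul, one_mul]
  congr 1
  ext i j
  rw [Matrix.mul_apply]
  simp only [Matrix.of_apply]
  have : ∀ k : Fin (n+1), (if k = 0 then c i else 0) * M k j
      = if k = 0 then c i * M 0 j else 0 := by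
    intro k
    by_cases h : k = 0
    · subst h; simp
    · simp [h]
  rw [Finset.sum_congr rfl fun k _ => this k, Finset.sum_ite_eq' Finset.univ 0
    (fun _ => c i * M 0 j)]
  simp

lemma mul_addRow (r : Fin (n+1) → RatFunc K) (M : Matrix (Fin (n+1)) (Fin (n+1)) (RatFunc K)) :
    M * addRow r = M + Matrix.of (fun i j => M i 0 * r j) := by
  rw [addRow, mul_add, mul_one]
  congr 1
  ext i j
  rw [Matrix.mul_apply]
  simp only [Matrix.of_apply]
  have : ∀ k : Fin (n+1), M i k * (if k = 0 then r j else 0)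
      = if k = 0 then M i 0 * r j else 0 := by
    intro k
    by_cases h : k = 0
    · subst h; simp
    · simp [h]
  rw [Finset.sum_congr rfl fun k _ => this k, Finset.sum_ite_eq' Finset.univ 0
    (fun _ => M i 0 * r j)]
  simp

lemma addCol_apply_zero (c : Fin (n+1) → RatFunc K) (h0 : c 0 = 0) (j : Fin (n+1)) :
    addCol c 0 j = (1 : Matrix (Fin (n+1)) (Fin (n+1)) (RatFunc K)) 0 j := by
  simp only [addCol, Matrix.add_apply, Matrix.of_apply]
  by_cases h : j = 0 <;> simp [h, h0]

lemma addRow_apply_zero (r : Fin (n+1) → RatFunc K) (h0 : r 0 = 0) (i : Fin (n+1)) :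
    addRow r i 0 = (1 : Matrix (Fin (n+1)) (Fin (n+1)) (RatFunc K)) i 0 := by
  simp only [addRow, Matrix.add_apply, Matrix.of_apply]
  by_cases h : i = 0 <;> simp [h, h0]

lemma addCol_mul_addCol (c c' : Fin (n+1) → RatFunc K) (h0 : c 0 = 0) (h0' : c' 0 = 0) :
    addCol c * addCol c' = addCol (c + c') := by
  rw [addCol_mul]
  ext i j
  simp only [Matrix.add_apply, Matrix.of_apply, addCol, Pi.add_apply]
  by_cases h : j = 0
  · subst h
    simp only [if_pos rfl, h0']
    by_cases hi : i = 0
    · subst hi; simp [h0]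
    · simp [Matrix.one_apply, hi]; ring
  · simp [h]
    right
    rw [Matrix.one_apply]
    simp [Ne.symm h]

lemma addRow_mul_addRow (r r' : Fin (n+1) → RatFunc K) (h0 : r 0 = 0) (h0' : r' 0 = 0) :
    addRow r * addRow r' = addRow (r + r') := by
  rw [mul_addRow]
  ext i j
  simp only [Matrix.add_apply, Matrix.of_apply, addRow, Pi.add_apply]
  by_cases h : i = 0
  · subst h
    simp only [if_pos rfl, h0]
    by_cases hj : j = 0
    · subst hj; simp [h0']
    · simp [Matrix.one_apply]; ring
  · simp [h]

lemma proper_addCol (c : Fin (n+1) → RatFunc K) (hc : ∀ i, degBot (c i) ≤ 0) :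
    Proper (addCol c) := by
  intro i j
  simp only [addCol, Matrix.add_apply, Matrix.of_apply]
  by_cases h : j = 0
  · subst h
    refine le_trans (degBot_add_le _ _) (max_le (Proper.one i 0) ?_)
    simpa using hc i
  · simpa [h] using Proper.one i j

lemma proper_addRow (r : Fin (n+1) → RatFunc K) (hr : ∀ j, degBot (r j) ≤ 0) :
    Proper (addRow r) := by
  intro i j
  simp only [addRow, Matrix.add_apply, Matrix.of_apply]
  by_cases h : i = 0
  · subst h
    refine le_trans (degBot_add_le _ _) (max_le (Proper.one 0 j) ?_)
    simpa using hr j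
  · simpa [h] using Proper.one i j

lemma addCol_zero : addCol (fun _ => (0 : RatFunc K)) = (1 : Matrix (Fin (n+1)) (Fin (n+1)) (RatFunc K)) := by
  ext i j
  simp [addCol]

lemma addRow_zero : addRow (fun _ => (0 : RatFunc K)) = (1 : Matrix (Fin (n+1)) (Fin (n+1)) (RatFunc K)) := by
  ext i j
  simp [addRow]

lemma biproper_addCol (c : Fin (n+1) → RatFunc K) (h0 : c 0 = 0) (hc : ∀ i, degBot (c i) ≤ 0) :
    Biproper (addCol c) := by
  refine ⟨proper_addCol c hc, addCol (-c), proper_addCol _ (fun i => by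
    simpa [degBot_neg] using hc i), ?_, ?_⟩
  · rw [addCol_mul_addCol c (-c) h0 (by simp [h0])]
    simpa [Pi.zero_def] using addCol_zero
  · rw [addCol_mul_addCol (-c) c (by simp [h0]) h0]
    simpa [Pi.zero_def] using addCol_zero

lemma biproper_addRow (r : Fin (n+1) → RatFunc K) (h0 : r 0 = 0) (hr : ∀ j, degBot (r j) ≤ 0) :
    Biproper (addRow r) := by
  refine ⟨proper_addRow r hr, addRow (-r), proper_addRow _ (fun j => by
    simpa [degBot_neg] using hr j), ?_, ?_⟩
  · rw [addRow_mul_addRow r (-r) h0 (by simp [h0])]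
    simpa [Pi.zero_def] using addRow_zero
  · rw [addRow_mul_addRow (-r) r (by simp [h0]) h0]
    simpa [Pi.zero_def] using addRow_zero

end SM

namespace SM
variable {K : Type*} [Field K]
open Matrix

variable {n : ℕ}

/-- Block diagonal matrix `diag(x, B)`. -/
noncomputable def bd (x : RatFunc K) (B : Matrix (Fin n) (Fin n) (RatFunc K)) :
    Matrix (Fin (n+1)) (Fin (n+1)) (RatFunc K) :=
  Matrix.of fun i j =>
    Fin.cases (Fin.cases x (fun _ => 0) j) (fun i' => Fin.cases 0 (fun j' => B i' j') j) i

@[simp] lemma bd_zero_zero (x : RatFunc K) (B : Matrix (Fin n) (Fin n) (RatFunc K)) :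
    bd x B 0 0 = x := rfl

@[simp] lemma bd_zero_succ (x : RatFunc K) (B : Matrix (Fin n) (Fin n) (RatFunc K)) (j : Fin n) :
    bd x B 0 j.succ = 0 := rfl

@[simp] lemma bd_succ_zero (x : RatFunc K) (B : Matrix (Fin n) (Fin n) (RatFunc K)) (i : Fin n) :
    bd x B i.succ 0 = 0 := rfl

@[simp] lemma bd_succ_succ (x : RatFunc K) (B : Matrix (Fin n) (Fin n) (RatFunc K)) (i j : Fin n) :
    bd x B i.succ j.succ = B i j := rfl

lemma bd_mul (x y : RatFunc K) (B C : Matrix (Fin n) (Fin n) (RatFunc K)) :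
    bd x B * bd y C = bd (x * y) (B * C) := by
  ext i j
  rw [Matrix.mul_apply, Fin.sum_univ_succ]
  induction i using Fin.cases with
  | zero =>
    induction j using Fin.cases with
    | zero => simp
    | succ j => simp
  | succ i =>
    induction j using Fin.cases with
    | zero => simp
    | succ j => simp [Matrix.mul_apply]

lemma bd_one : bd 1 (1 : Matrix (Fin n) (Fin n) (RatFunc K)) = 1 := by
  ext i j
  induction i using Fin.cases with
  | zero =>
    induction j using Fin.cases with
    | zero => simp [Matrix.one_apply]
    | succ j => simp [Matrix.one_apply, (Fin.succ_ne_zero j).symm]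
  | succ i =>
    induction j using Fin.cases with
    | zero => simp [Matrix.one_apply, Fin.succ_ne_zero i]
    | succ j => simp [Matrix.one_apply, Fin.succ_inj]

lemma bd_diagonal (x : RatFunc K) (g : Fin n → RatFunc K) :
    bd x (Matrix.diagonal g) = Matrix.diagonal (Fin.cons x g) := by
  ext i j
  induction i using Fin.cases with
  | zero =>
    induction j using Fin.cases with
    | zero => simp [Matrix.diagonal_apply]
    | succ j => simp [Matrix.diagonal_apply, (Fin.succ_ne_zero j).symm]
  | succ i =>
    induction j using Fin.cases with
    | zero => simp [Matrix.diagonal_apply, Fin.succ_ne_zero i]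
    | succ j =>
      by_cases h : i = j
      · subst h; simp
      · simp [Matrix.diagonal_apply, h, Fin.succ_inj, fun hh => h (Fin.succ_inj.mp hh)]

lemma proper_bd {x : RatFunc K} {B : Matrix (Fin n) (Fin n) (RatFunc K)}
    (hx : degBot x ≤ 0) (hB : Proper B) : Proper (bd x B) := by
  intro i j
  induction i using Fin.cases with
  | zero =>
    induction j using Fin.cases with
    | zero => simpa using hx
    | succ j => simp [degBot_zero]
  | succ i =>
    induction j using Fin.cases with
    | zero => simp [degBot_zero]
    | succ j => simpa using hB i j

lemma biproper_bd {x : RatFunc K} {B : Matrix (Fin n) (Fin n) (RatFunc K)}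
    (hx : x ≠ 0) (hx0 : degBot x ≤ 0) (hxi : degBot x⁻¹ ≤ 0) (hB : Biproper B) :
    Biproper (bd x B) := by
  obtain ⟨hBp, B', hB'p, hBB', hB'B⟩ := hB
  refine ⟨proper_bd hx0 hBp, bd x⁻¹ B', proper_bd hxi hB'p, ?_, ?_⟩
  · rw [bd_mul, mul_inv_cancel₀ hx, hBB', bd_one]
  · rw [bd_mul, inv_mul_cancel₀ hx, hB'B, bd_one]

lemma bd_submatrix (x : RatFunc K) (B : Matrix (Fin n) (Fin n) (RatFunc K)) :
    (bd x B).submatrix Fin.succ Fin.succ = B := by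
  ext i j
  simp [Matrix.submatrix_apply]

lemma det_bd (x : RatFunc K) (B : Matrix (Fin n) (Fin n) (RatFunc K)) :
    (bd x B).det = x * B.det := by
  rw [Matrix.det_succ_column_zero, Fin.sum_univ_succ]
  simp only [bd_succ_zero, mul_zero, zero_mul, Finset.sum_const_zero, add_zero]
  rw [Fin.succAbove_zero, bd_submatrix, bd_zero_zero]
  simp

end SM

namespace SM
variable {K : Type*} [Field K]
open Matrix

lemma degBot_eq_bot_iff {f : RatFunc K} : degBot f = ⊥ ↔ f = 0 := by
  constructor
  · intro h
    by_contra hf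
    rw [degBot_of_ne hf] at h
    exact WithBot.coe_ne_bot h
  · intro h; subst h; exact degBot_zero

lemma intDegree_inv {f : RatFunc K} (hf : f ≠ 0) : f⁻¹.intDegree = -f.intDegree := by
  have h := RatFunc.intDegree_mul hf (inv_ne_zero hf)
  rw [mul_inv_cancel₀ hf, RatFunc.intDegree_one] at h
  omega

lemma det_ne_zero_of_mul_eq_one {m : ℕ} {M M' : Matrix (Fin m) (Fin m) (RatFunc K)}
    (h : M * M' = 1) : M.det ≠ 0 := by
  intro h0
  have := congrArg Matrix.det h
  rw [Matrix.det_mul, h0, zero_mul, Matrix.det_one] at this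
  exact zero_ne_one this

lemma antitone_cons {n : ℕ} {e : ℤ} {α : Fin n → ℤ} (hα : Antitone α) (he : ∀ i, α i ≤ e) :
    Antitone (Fin.cons e α : Fin (n+1) → ℤ) := by
  intro i j hij
  induction j using Fin.cases with
  | zero =>
    have : i = 0 := Fin.le_zero_iff.mp hij
    subst this; rfl
  | succ j =>
    induction i using Fin.cases with
    | zero => simpa using he j
    | succ i =>
      simp only [Fin.cons_succ]
      exact hα (Fin.succ_le_succ_iff.mp hij)

lemma key : ∀ (n : ℕ) (A : Matrix (Fin n) (Fin n) (RatFunc K)), A.det ≠ 0 → ∀ d : ℤ,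
    (∀ i j, degBot (A i j) ≤ (d : WithBot ℤ)) →
    ∃ (S T : Matrix (Fin n) (Fin n) (RatFunc K)) (α : Fin n → ℤ),
      Antitone α ∧ (∀ i, α i ≤ d) ∧ Biproper S ∧ Biproper T ∧
      S * A * T = Matrix.diagonal (fun i => (RatFunc.X : RatFunc K) ^ (α i)) := by
  intro n
  induction n with
  | zero =>
    intro A _ d _
    refine ⟨1, 1, fun _ => 0, ?_, ?_, Biproper.one, Biproper.one, ?_⟩
    · intro i; exact absurd i.2 (by omega)
    · intro i; exact absurd i.2 (by omega)
    · ext i j; exact absurd i.2 (by omega)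
  | succ n ih =>
    intro A hdet d hd
    classical
    obtain ⟨⟨i₀, j₀⟩, -, hmax⟩ := Finset.exists_max_image (Finset.univ)
      (fun p : Fin (n+1) × Fin (n+1) => degBot (A p.1 p.2)) ⟨(0,0), Finset.mem_univ _⟩
    have hmax' : ∀ i j, degBot (A i j) ≤ degBot (A i₀ j₀) := fun i j =>
      hmax (i, j) (Finset.mem_univ _)
    set a := A i₀ j₀ with ha_def
    have ha : a ≠ 0 := by
      intro h0
      apply hdet
      have : A = 0 := by
        ext i j
        have := hmax' i j
        rw [h0, degBot_zero, le_bot_iff, degBot_eq_bot_iff] at this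
        simpa using this
      rw [this, Matrix.det_zero]
    set e := a.intDegree with he_def
    have hae : degBot a = (e : WithBot ℤ) := degBot_of_ne ha
    have hed : e ≤ d := by
      have := hd i₀ j₀
      rw [← ha_def, hae] at this
      exact_mod_cast this
    have hX : (RatFunc.X : RatFunc K) ≠ 0 := RatFunc.X_ne_zero
    have hXe : ∀ z : ℤ, ((RatFunc.X : RatFunc K) ^ z) ≠ 0 := fun z => zpow_ne_zero z hX
    have hXinv : ((RatFunc.X : RatFunc K) ^ (-e)) * (RatFunc.X : RatFunc K) ^ e = 1 := by
      rw [← zpow_add₀ hX]; simp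
    -- the permuted matrix
    set σr : Equiv.Perm (Fin (n+1)) := Equiv.swap 0 i₀ with hσr
    set σc : Equiv.Perm (Fin (n+1)) := Equiv.swap 0 j₀ with hσc
    set B : Matrix (Fin (n+1)) (Fin (n+1)) (RatFunc K) := permMat σr * A * permMat σc with hB_def
    have hB : ∀ i j, B i j = A (σr i) (σc⁻¹ j) := by
      intro i j
      rw [hB_def, mul_permMat, permMat_mul]
      rfl
    have hσr0 : σr 0 = i₀ := by rw [hσr]; exact Equiv.swap_apply_left 0 i₀
    have hσc0 : σc⁻¹ 0 = j₀ := by rw [hσc, Equiv.swap_inv]; exact Equiv.swap_apply_left 0 j₀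
    have hB00 : B 0 0 = a := by
      rw [hB 0 0, hσr0, hσc0]
    have hBle : ∀ i j, degBot (B i j) ≤ (e : WithBot ℤ) := by
      intro i j; rw [hB i j, ← hae]; exact hmax' _ _
    -- scaling matrix
    set u : RatFunc K := a⁻¹ * (RatFunc.X : RatFunc K) ^ e with hu
    have hu0 : u ≠ 0 := mul_ne_zero (inv_ne_zero ha) (hXe e)
    have hudeg : u.intDegree = 0 := by
      rw [hu, RatFunc.intDegree_mul (inv_ne_zero ha) (hXe e), intDegree_inv ha,
        intDegree_X_zpow]
      omega
    set g : Fin (n+1) → RatFunc K := Fin.cons u (fun _ => 1) with hg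
    set D : Matrix (Fin (n+1)) (Fin (n+1)) (RatFunc K) := Matrix.diagonal g with hD
    have hgne : ∀ i, g i ≠ 0 := by
      intro i
      induction i using Fin.cases with
      | zero => simpa [hg] using hu0
      | succ i => simp [hg]
    have hDbi : Biproper D := by
      refine Biproper.diagonal hgne ?_ ?_
      · intro i
        induction i using Fin.cases with
        | zero =>
          simp only [hg, Fin.cons_zero]
          rw [degBot_of_ne hu0, hudeg]; rfl
        | succ i => simp [hg, degBot_one]
      · intro i
        induction i using Fin.cases with
        | zero =>
          simp only [hg, Fin.cons_zero]
          rw [degBot_of_ne (inv_ne_zero hu0), intDegree_inv hu0, hudeg]; rfl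
        | succ i => simp [hg, degBot_one]
    set M1 : Matrix (Fin (n+1)) (Fin (n+1)) (RatFunc K) := D * B with hM1_def
    have hM1z : ∀ j, M1 0 j = u * B 0 j := by
      intro j; rw [hM1_def, hD, Matrix.diagonal_mul]; simp [hg]
    have hM1s : ∀ (i : Fin n) j, M1 i.succ j = B i.succ j := by
      intro i j; rw [hM1_def, hD, Matrix.diagonal_mul]; simp [hg]
    have hM100 : M1 0 0 = (RatFunc.X : RatFunc K) ^ e := by
      rw [hM1z 0, hB00, hu, mul_comm a⁻¹ _, mul_assoc, inv_mul_cancel₀ ha, mul_one]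
    have hM1le : ∀ i j, degBot (M1 i j) ≤ (e : WithBot ℤ) := by
      intro i j
      induction i using Fin.cases with
      | zero =>
        rw [hM1z j, degBot_mul, degBot_of_ne hu0, hudeg]
        calc ((0 : ℤ) : WithBot ℤ) + degBot (B 0 j) ≤ 0 + (e : WithBot ℤ) :=
          add_le_add le_rfl (hBle 0 j)
        _ = (e : WithBot ℤ) := by rw [zero_add]
      | succ i => rw [hM1s i j]; exact hBle _ _
    -- column clearing
    set c : Fin (n+1) → RatFunc K :=
      Fin.cons 0 (fun i' => -(B i'.succ 0) * (RatFunc.X : RatFunc K) ^ (-e)) with hc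
    have hc0 : c 0 = 0 := by simp [hc]
    have hcle : ∀ i, degBot (c i) ≤ 0 := by
      intro i
      induction i using Fin.cases with
      | zero => simp [hc, degBot_zero]
      | succ i =>
        simp only [hc, Fin.cons_succ]
        rw [degBot_mul, degBot_neg, degBot_zpow]
        calc degBot (B i.succ 0) + ((-e : ℤ) : WithBot ℤ)
            ≤ (e : WithBot ℤ) + ((-e : ℤ) : WithBot ℤ) := add_le_add (hBle _ _) le_rfl
          _ = 0 := by norm_cast; omega
    set M2 : Matrix (Fin (n+1)) (Fin (n+1)) (RatFunc K) := addCol c * M1 with hM2_def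
    have hM2 : ∀ i j, M2 i j = M1 i j + c i * M1 0 j := by
      intro i j; rw [hM2_def, addCol_mul]; simp [Matrix.add_apply]
    have hM2z : ∀ j, M2 0 j = M1 0 j := by
      intro j; rw [hM2 0 j, hc0]; ring
    have hM200 : M2 0 0 = (RatFunc.X : RatFunc K) ^ e := by rw [hM2z, hM100]
    have hM2s0 : ∀ i : Fin n, M2 i.succ 0 = 0 := by
      intro i
      rw [hM2 _ _, hM1s i 0, hM100]
      simp only [hc, Fin.cons_succ]
      linear_combination (-(B i.succ 0)) * hXinv
    have hM2le : ∀ i j, degBot (M2 i j) ≤ (e : WithBot ℤ) := by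
      intro i j
      rw [hM2 i j]
      refine le_trans (degBot_add_le _ _) (max_le (hM1le i j) ?_)
      rw [degBot_mul]
      calc degBot (c i) + degBot (M1 0 j) ≤ 0 + (e : WithBot ℤ) :=
        add_le_add (hcle i) (hM1le 0 j)
      _ = _ := zero_add _
    -- row clearing
    set r : Fin (n+1) → RatFunc K :=
      Fin.cons 0 (fun j' => -(M2 0 j'.succ) * (RatFunc.X : RatFunc K) ^ (-e)) with hr
    have hr0 : r 0 = 0 := by simp [hr]
    have hrle : ∀ j, degBot (r j) ≤ 0 := by
      intro j
      induction j using Fin.cases with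
      | zero => simp [hr, degBot_zero]
      | succ j =>
        simp only [hr, Fin.cons_succ]
        rw [degBot_mul, degBot_neg, degBot_zpow]
        calc degBot (M2 0 j.succ) + ((-e : ℤ) : WithBot ℤ)
            ≤ (e : WithBot ℤ) + ((-e : ℤ) : WithBot ℤ) := add_le_add (hM2le _ _) le_rfl
          _ = 0 := by norm_cast; omega
    set M3 : Matrix (Fin (n+1)) (Fin (n+1)) (RatFunc K) := M2 * addRow r with hM3_def
    have hM3 : ∀ i j, M3 i j = M2 i j + M2 i 0 * r j := by
      intro i j; rw [hM3_def, mul_addRow]; simp [Matrix.add_apply]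
    have hM300 : M3 0 0 = (RatFunc.X : RatFunc K) ^ e := by
      rw [hM3 0 0, hr0, hM200]; ring
    have hM3zs : ∀ j : Fin n, M3 0 j.succ = 0 := by
      intro j
      rw [hM3 0 j.succ, hM200]
      simp only [hr, Fin.cons_succ]
      linear_combination (-(M2 0 j.succ)) * hXinv
    have hM3s0 : ∀ i : Fin n, M3 i.succ 0 = 0 := by
      intro i
      rw [hM3 i.succ 0, hM2s0 i, hr0]; ring
    have hM3ss : ∀ i j : Fin n, M3 i.succ j.succ = M2 i.succ j.succ := by
      intro i j
      rw [hM3 i.succ j.succ, hM2s0 i]; ring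
    set A₂ : Matrix (Fin n) (Fin n) (RatFunc K) := Matrix.of (fun i j => M2 i.succ j.succ)
      with hA₂_def
    have hA₂app : ∀ i j, A₂ i j = M2 i.succ j.succ := fun i j => rfl
    have hM3bd : M3 = bd ((RatFunc.X : RatFunc K) ^ e) A₂ := by
      ext i j
      induction i using Fin.cases with
      | zero =>
        induction j using Fin.cases with
        | zero => rw [hM300, bd_zero_zero]
        | succ j => rw [hM3zs j, bd_zero_succ]
      | succ i =>
        induction j using Fin.cases with
        | zero => rw [hM3s0 i, bd_succ_zero]
        | succ j => rw [hM3ss i j, bd_succ_succ, hA₂app]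
    have hA₂le : ∀ i j, degBot (A₂ i j) ≤ (e : WithBot ℤ) := by
      intro i j; rw [hA₂app]; exact hM2le _ _
    -- determinant of the block matrix
    have hE : Biproper (addCol c * D * permMat σr) :=
      ((biproper_addCol c hc0 hcle).mul hDbi).mul (biproper_permMat σr)
    have hF : Biproper (permMat σc * addRow r : Matrix (Fin (n+1)) (Fin (n+1)) (RatFunc K)) :=
      (biproper_permMat σc).mul (biproper_addRow r hr0 hrle)
    have hM3eq : M3 = (addCol c * D * permMat σr) * A * (permMat σc * addRow r) := by
      rw [hM3_def, hM2_def, hM1_def, hB_def]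
      simp only [Matrix.mul_assoc]
    have hdet3 : M3.det ≠ 0 := by
      rw [hM3eq, Matrix.det_mul, Matrix.det_mul]
      obtain ⟨-, E', -, hEE', -⟩ := hE
      obtain ⟨-, F', -, hFF', -⟩ := hF
      exact mul_ne_zero (mul_ne_zero (det_ne_zero_of_mul_eq_one hEE') hdet)
        (det_ne_zero_of_mul_eq_one hFF')
    have hdetA₂ : A₂.det ≠ 0 := by
      intro h0
      rw [hM3bd, det_bd, h0, mul_zero] at hdet3
      exact hdet3 rfl
    obtain ⟨S₂, T₂, α₂, hanti₂, hle₂, hS₂, hT₂, hST₂⟩ :=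
      ih A₂ hdetA₂ e (fun i j => hA₂le i j)
    have hbd1S : Biproper (bd 1 S₂) :=
      biproper_bd one_ne_zero (le_of_eq degBot_one)
        (by rw [inv_one]; exact le_of_eq degBot_one) hS₂
    have hbd1T : Biproper (bd 1 T₂) :=
      biproper_bd one_ne_zero (le_of_eq degBot_one)
        (by rw [inv_one]; exact le_of_eq degBot_one) hT₂
    refine ⟨bd 1 S₂ * (addCol c * D * permMat σr), (permMat σc * addRow r) * bd 1 T₂,
      (Fin.cons e α₂ : Fin (n+1) → ℤ), antitone_cons hanti₂ hle₂, ?_, hbd1S.mul hE,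
      hF.mul hbd1T, ?_⟩
    · intro i
      induction i using Fin.cases with
      | zero => simpa using hed
      | succ i => simp only [Fin.cons_succ]; exact le_trans (hle₂ i) hed
    · have step1 : bd 1 S₂ * (addCol c * D * permMat σr) * A * ((permMat σc * addRow r) * bd 1 T₂)
          = bd 1 S₂ * M3 * bd 1 T₂ := by
        rw [hM3eq]
        simp only [Matrix.mul_assoc]
      have hfun : (fun i : Fin (n+1) => (RatFunc.X : RatFunc K) ^ ((Fin.cons e α₂ : Fin (n+1) → ℤ) i))
          = Fin.cons ((RatFunc.X : RatFunc K) ^ e) (fun i => (RatFunc.X : RatFunc K) ^ (α₂ i)) := by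
        funext i
        induction i using Fin.cases with
        | zero => simp
        | succ i => simp
      rw [step1, hM3bd, bd_mul, bd_mul, one_mul, mul_one, hST₂, hfun, bd_diagonal]
end SM

namespace SM
set_option synthInstance.maxHeartbeats 400000
set_option maxHeartbeats 800000
variable {K : Type*} [Field K]
open Matrix

/-- Row expansion (Cauchy–Binet style) of the determinant of a rectangular product. -/
lemma det_rect_mul {k n : ℕ} (S : Matrix (Fin k) (Fin n) (RatFunc K))
    (M : Matrix (Fin n) (Fin k) (RatFunc K)) :
    (S * M).det = ∑ f : Fin k → Fin n, (∏ i, S i (f i)) * (M.submatrix f id).det := by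
  have h1 : S * M = Matrix.of (fun i => ∑ l : Fin n, S i l • M l) := by
    ext i j
    simp [Matrix.mul_apply, Finset.sum_apply]
  rw [h1]
  have h2 : (Matrix.of (fun i => ∑ l : Fin n, S i l • M l)).det
      = (Matrix.detRowAlternating : AlternatingMap (RatFunc K) (Fin k → RatFunc K)
          (RatFunc K) (Fin k)).toMultilinearMap (fun i => ∑ l : Fin n, S i l • M l) := rfl
  rw [h2, (Matrix.detRowAlternating : AlternatingMap (RatFunc K) (Fin k → RatFunc K)
    (RatFunc K) (Fin k)).toMultilinearMap.map_sum]
  refine Finset.sum_congr rfl fun f _ => ?_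
  have h3 : (Matrix.detRowAlternating : AlternatingMap (RatFunc K) (Fin k → RatFunc K)
      (RatFunc K) (Fin k)).toMultilinearMap (fun i => S i (f i) • M (f i))
      = (∏ i, S i (f i)) • (Matrix.detRowAlternating : AlternatingMap (RatFunc K)
        (Fin k → RatFunc K) (RatFunc K) (Fin k)).toMultilinearMap (fun i => M (f i)) :=
    MultilinearMap.map_smul_univ _ _ _
  rw [h3, smul_eq_mul]
  rfl

lemma degBot_det_minor_mul_le {k n : ℕ} (S M : Matrix (Fin n) (Fin n) (RatFunc K))
    (hS : Proper S) (p q : Fin k ↪ Fin n) :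
    degBot ((S * M).submatrix p q).det ≤ deltaMinor M k := by
  have hsub : (S * M).submatrix p q = (S.submatrix p id) * (M.submatrix id q) := by
    ext i j
    simp [Matrix.mul_apply]
  rw [hsub, det_rect_mul]
  refine degBot_sum_le _ _ _ fun f _ => ?_
  by_cases hf : Function.Injective f
  · rw [degBot_mul]
    have hprod : degBot (∏ i, (S.submatrix p id) i (f i)) ≤ 0 := by
      rw [degBot_prod]
      refine Finset.sum_nonpos fun i _ => ?_
      simpa using hS (p i) (f i)
    have hm : degBot (((M.submatrix id q).submatrix f id).det) ≤ deltaMinor M k := by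
      have heq : (M.submatrix id q).submatrix f id = M.submatrix (⟨f, hf⟩ : Fin k ↪ Fin n) q := by
        ext i j; simp
      rw [heq]
      exact Finset.le_sup (f := fun p : (Fin k ↪ Fin n) × (Fin k ↪ Fin n) =>
        degBot (M.submatrix p.1 p.2).det) (Finset.mem_univ ((⟨f, hf⟩ : Fin k ↪ Fin n), q))
    calc degBot (∏ i, (S.submatrix p id) i (f i)) + degBot (((M.submatrix id q).submatrix f id).det)
        ≤ 0 + deltaMinor M k := add_le_add hprod hm
      _ = deltaMinor M k := zero_add _
  · have : ((M.submatrix id q).submatrix f id).det = 0 := by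
      rw [Function.not_injective_iff] at hf
      obtain ⟨i, j, hfij, hij⟩ := hf
      refine Matrix.det_zero_of_row_eq hij ?_
      funext l
      simp [hfij]
    rw [this, mul_zero, degBot_zero]
    exact bot_le

lemma deltaMinor_mul_left_le {n : ℕ} (S M : Matrix (Fin n) (Fin n) (RatFunc K))
    (hS : Proper S) (k : ℕ) : deltaMinor (S * M) k ≤ deltaMinor M k :=
  Finset.sup_le fun p _ => degBot_det_minor_mul_le S M hS p.1 p.2

lemma deltaMinor_transpose {n : ℕ} (M : Matrix (Fin n) (Fin n) (RatFunc K)) (k : ℕ) :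
    deltaMinor Mᵀ k = deltaMinor M k := by
  have key : ∀ (N : Matrix (Fin n) (Fin n) (RatFunc K)), deltaMinor Nᵀ k ≤ deltaMinor N k := by
    intro N
    refine Finset.sup_le fun p _ => ?_
    have : (Nᵀ.submatrix p.1 p.2) = (N.submatrix p.2 p.1)ᵀ := by
      ext i j; simp
    rw [this, Matrix.det_transpose]
    exact Finset.le_sup (f := fun p : (Fin k ↪ Fin n) × (Fin k ↪ Fin n) =>
      degBot (N.submatrix p.1 p.2).det) (Finset.mem_univ (p.2, p.1))
  refine le_antisymm (key M) ?_
  have := key Mᵀ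
  rwa [Matrix.transpose_transpose] at this

lemma deltaMinor_mul_right_le {n : ℕ} (M T : Matrix (Fin n) (Fin n) (RatFunc K))
    (hT : Proper T) (k : ℕ) : deltaMinor (M * T) k ≤ deltaMinor M k := by
  rw [← deltaMinor_transpose (M * T) k, Matrix.transpose_mul, ← deltaMinor_transpose M k]
  exact deltaMinor_mul_left_le Tᵀ Mᵀ (fun i j => hT j i) k

lemma deltaMinor_invariant {n : ℕ} {S T A : Matrix (Fin n) (Fin n) (RatFunc K)}
    (hS : Biproper S) (hT : Biproper T) (k : ℕ) :
    deltaMinor (S * A * T) k = deltaMinor A k := by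
  obtain ⟨hSp, S', hS'p, hSS', hS'S⟩ := hS
  obtain ⟨hTp, T', hT'p, hTT', hT'T⟩ := hT
  refine le_antisymm ?_ ?_
  · exact le_trans (deltaMinor_mul_right_le (S * A) T hTp k)
      (deltaMinor_mul_left_le S A hSp k)
  · have hback : A = S' * (S * A * T) * T' := by
      calc A = (S' * S) * A * (T * T') := by rw [hS'S, hTT', Matrix.one_mul, Matrix.mul_one]
        _ = S' * (S * A * T) * T' := by simp only [Matrix.mul_assoc]
    calc deltaMinor A k = deltaMinor (S' * (S * A * T) * T') k := by rw [← hback]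
      _ ≤ deltaMinor (S * A * T) k := le_trans
        (deltaMinor_mul_right_le (S' * (S * A * T)) T' hT'p k)
        (deltaMinor_mul_left_le S' (S * A * T) hS'p k)

end SM

namespace SM
variable {K : Type*} [Field K]
open Matrix

lemma strictMono_val_le {k n : ℕ} {q : Fin k → Fin n} (hq : StrictMono q) :
    ∀ m : ℕ, ∀ hm : m < k, m ≤ (q ⟨m, hm⟩ : ℕ) := by
  intro m
  induction m with
  | zero => intro hm; exact Nat.zero_le _
  | succ m ihm =>
    intro hm
    have hm' : m < k := Nat.lt_of_succ_lt hm
    have h1 := ihm hm'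
    have h2 : q ⟨m, hm'⟩ < q ⟨m + 1, hm⟩ := hq (by simp [Fin.lt_def])
    have h3 := Fin.lt_def.mp h2
    omega

lemma sum_alpha_le {n k : ℕ} {α : Fin n → ℤ} (hα : Antitone α) (p : Fin k ↪ Fin n) (h : k ≤ n) :
    ∑ i, α (p i) ≤ ∑ i : Fin k, α (Fin.castLE h i) := by
  set σ := Tuple.sort (p : Fin k → Fin n) with hσ
  have hmono : Monotone ((p : Fin k → Fin n) ∘ σ) := Tuple.monotone_sort _
  have hsm : StrictMono ((p : Fin k → Fin n) ∘ σ) :=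
    hmono.strictMono_of_injective (p.injective.comp σ.injective)
  have h1 : ∑ i, α (p i) = ∑ i, α (p (σ i)) := (Equiv.sum_comp σ (fun i => α (p i))).symm
  rw [h1]
  refine Finset.sum_le_sum fun i _ => ?_
  apply hα
  rw [Fin.le_def]
  have := strictMono_val_le hsm i.1 i.2
  simpa using this

lemma degBot_det_le {k : ℕ} (N : Matrix (Fin k) (Fin k) (RatFunc K)) (β : Fin k → WithBot ℤ)
    (h : ∀ i j, degBot (N i j) ≤ β i) : degBot N.det ≤ ∑ i, β i := by
  rw [Matrix.det_apply]
  refine degBot_sum_le _ _ _ fun σ _ => ?_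
  have hsmul : degBot (Equiv.Perm.sign σ • ∏ i, N (σ i) i) = degBot (∏ i, N (σ i) i) := by
    rcases Int.units_eq_one_or (Equiv.Perm.sign σ) with hs | hs <;> rw [hs]
    · rw [one_smul]
    · rw [Units.neg_smul, one_smul, degBot_neg]
  rw [hsmul, degBot_prod]
  calc ∑ i, degBot (N (σ i) i) ≤ ∑ i, β (σ i) := Finset.sum_le_sum fun i _ => h (σ i) i
    _ = ∑ i, β i := Equiv.sum_comp σ β

lemma coe_sum_withBot {ι : Type*} (s : Finset ι) (z : ι → ℤ) :
    ((∑ i ∈ s, z i : ℤ) : WithBot ℤ) = ∑ i ∈ s, (z i : WithBot ℤ) := by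
  classical
  induction s using Finset.induction with
  | empty => simp
  | insert a s h ih =>
    rw [Finset.sum_insert h, Finset.sum_insert h, WithBot.coe_add, ih]

lemma deltaMinor_diagonal {n : ℕ} (α : Fin n → ℤ) (hα : Antitone α) (k : ℕ) (h : k ≤ n) :
    deltaMinor (Matrix.diagonal (fun i => (RatFunc.X : RatFunc K) ^ (α i))) k
      = ((∑ i : Fin k, α (Fin.castLE h i) : ℤ) : WithBot ℤ) := by
  refine le_antisymm ?_ ?_
  · refine Finset.sup_le ?_
    rintro ⟨p, q⟩ -
    have hb : ∀ i j, degBot (((Matrix.diagonal fun i =>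
        (RatFunc.X : RatFunc K) ^ α i).submatrix p q) i j) ≤ ((α (p i) : ℤ) : WithBot ℤ) := by
      intro i j
      simp only [Matrix.submatrix_apply, Matrix.diagonal_apply]
      split
      · rw [degBot_zpow]
      · rw [degBot_zero]; exact bot_le
    refine le_trans (degBot_det_le _ _ hb) ?_
    rw [← coe_sum_withBot]
    exact_mod_cast sum_alpha_le hα p h
  · set pe : Fin k ↪ Fin n := (Fin.castLEEmb h) with hpe
    have hle := Finset.le_sup (f := fun p : (Fin k ↪ Fin n) × (Fin k ↪ Fin n) =>
      degBot (((Matrix.diagonal fun i => (RatFunc.X : RatFunc K) ^ α i).submatrix p.1 p.2)).det)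
      (Finset.mem_univ (pe, pe))
    refine le_trans (le_of_eq ?_) hle
    have hsub : (Matrix.diagonal fun i => (RatFunc.X : RatFunc K) ^ α i).submatrix pe pe
        = Matrix.diagonal (fun i : Fin k => (RatFunc.X : RatFunc K) ^ α (Fin.castLE h i)) := by
      ext i j
      simp only [Matrix.submatrix_apply, Matrix.diagonal_apply, hpe]
      by_cases hij : i = j
      · subst hij; simp
      · have : (Fin.castLEEmb h) i ≠ (Fin.castLEEmb h) j :=
          fun hc => hij ((Fin.castLEEmb h).injective hc)
        simp [hij, this]
    show _ = degBot ((Matrix.diagonal fun i => (RatFunc.X : RatFunc K) ^ α i).submatrix pe pe).det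
    rw [hsub, Matrix.det_diagonal, degBot_prod]
    simp only [degBot_zpow]
    rw [← coe_sum_withBot]

end SM

/-- Smith–McMillan form at infinity: for a nonsingular `A ∈ K(t)^{n×n}` there are biproper
matrices `S, T` and a nonincreasing integer vector `α` with `S A T = diag(t^{α_1},…,t^{α_n})`;
moreover `α_k = δ_k − δ_{k−1}` where `δ_k` is the maximum degree of a `k × k` minor of `A`. -/
theorem smith_mcmillan_form {K : Type*} [Field K] {n : ℕ}
    (A : Matrix (Fin n) (Fin n) (RatFunc K)) (hA : A.det ≠ 0) :
    ∃ (S T : Matrix (Fin n) (Fin n) (RatFunc K)) (α : Fin n → ℤ),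
      Antitone α ∧
      (∀ i j, degBot (S i j) ≤ 0) ∧ (∀ i j, degBot (T i j) ≤ 0) ∧
      (∃ S', (∀ i j, degBot (S' i j) ≤ 0) ∧ S * S' = 1 ∧ S' * S = 1) ∧
      (∃ T', (∀ i j, degBot (T' i j) ≤ 0) ∧ T * T' = 1 ∧ T' * T = 1) ∧
      S * A * T = Matrix.diagonal (fun i => (RatFunc.X : RatFunc K) ^ (α i)) ∧
      ∀ k : Fin n, deltaMinor A (k + 1) = deltaMinor A k + (α k : WithBot ℤ) := by
  classical
  have hbound : ∃ d : ℤ, ∀ i j, degBot (A i j) ≤ (d : WithBot ℤ) := by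
    rcases h : Finset.univ.sup (fun p : Fin n × Fin n => degBot (A p.1 p.2)) with _ | z
    · refine ⟨0, fun i j => ?_⟩
      have hl := Finset.le_sup (f := fun p : Fin n × Fin n => degBot (A p.1 p.2))
        (Finset.mem_univ (i, j))
      rw [h] at hl
      exact le_trans hl bot_le
    · refine ⟨z, fun i j => ?_⟩
      have hl := Finset.le_sup (f := fun p : Fin n × Fin n => degBot (A p.1 p.2))
        (Finset.mem_univ (i, j))
      rw [h] at hl
      exact_mod_cast hl
  obtain ⟨d, hd⟩ := hbound
  obtain ⟨S, T, α, hanti, -, hSbi, hTbi, hprod⟩ := SM.key n A hA d hd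
  obtain ⟨hSp, S', hS'p, hSS', hS'S⟩ := id hSbi
  obtain ⟨hTp, T', hT'p, hTT', hT'T⟩ := id hTbi
  refine ⟨S, T, α, hanti, hSp, hTp, ⟨S', hS'p, hSS', hS'S⟩, ⟨T', hT'p, hTT', hT'T⟩, hprod, ?_⟩
  intro k
  have hinv : ∀ m : ℕ, deltaMinor A m
      = deltaMinor (Matrix.diagonal (fun i => (RatFunc.X : RatFunc K) ^ (α i))) m := by
    intro m
    rw [← hprod, SM.deltaMinor_invariant hSbi hTbi]
  have hk1 : (k : ℕ) + 1 ≤ n := k.2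
  have hk : (k : ℕ) ≤ n := le_of_lt k.2
  rw [hinv ((k : ℕ) + 1), hinv (k : ℕ), SM.deltaMinor_diagonal α hanti _ hk1,
    SM.deltaMinor_diagonal α hanti _ hk]
  rw [Fin.sum_univ_castSucc]
  have h2 : Fin.castLE hk1 (Fin.last (k : ℕ)) = k := by
    apply Fin.ext; simp
  have h1 : (∑ i : Fin (k : ℕ), α (Fin.castLE hk1 (Fin.castSucc i)))
      = ∑ i : Fin (k : ℕ), α (Fin.castLE hk i) := by
    refine Finset.sum_congr rfl fun i _ => ?_
    congr 1
  rw [h1, h2, WithBot.coe_add]
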